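/- arXiv:0804.3671 — 13 statements merged into one kernel-verified Lean document; each statement's English description precedes it below -/
import Mathlib

section
/- If c₁ and c₂ belong to C∘(w) and |c₁| < |c₂|, then c₁ is a proper suffix of c₂. In particular, any two elements of C∘(w) of the same length are equal, and every element of C∘(w) is a proper suffix of w. -/
/-- Elementwise concatenation of two languages: `L₁·L₂`. -/
def lconc {α : Type*} (L₁ L₂ : Set (List α)) : Set (List α) :=
  {x | ∃ a ∈ L₁, ∃ b ∈ L₂, x = a ++ b}

/-- Kleene star of a language: all finite concatenations of its elements. -/
def lstar {α : Type*} (L : Set (List α)) : Set (List α) :=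
  {x | ∃ S : List (List α), (∀ y ∈ S, y ∈ L) ∧ x = S.flatten}

/-- `A⁺`: the set of nonempty words. -/
def Aplus (α : Type*) : Set (List α) := {x : List α | x ≠ []}

/-- `w` occurs at position `i` in `T`. -/
def occursAt {α : Type*} (w T : List α) (i : ℕ) : Prop :=
  ∃ x y : List α, T = x ++ w ++ y ∧ x.length = i

/-- The autocorrelation set `C(w)`. -/
def Corr {α : Type*} (w : List α) : Set (List α) :=
  {c | c.length < w.length ∧ ∃ e, w ++ c = e ++ w}

/-- `C∘(w) = C(w) \ {[]}`. -/
def CorrPos {α : Type*} (w : List α) : Set (List α) := Corr w \ {[]}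

/-- The prefix code `K(w) = C∘(w) \ C∘(w)·A⁺`. -/
def KCode {α : Type*} (w : List α) : Set (List α) :=
  CorrPos w \ lconc (CorrPos w) (Aplus α)


lemma corr_suffix {α : Type*} (w : List α) {c : List α} (hc : c ∈ Corr w) : c <:+ w := by
  obtain ⟨hlt, e, he⟩ := hc
  have h1 : c <:+ e ++ w := he ▸ List.suffix_append w c
  exact List.suffix_of_suffix_length_le h1 (List.suffix_append e w) (Nat.le_of_lt hlt)

/-- elements of `C∘(w)` of smaller length are proper suffixes of longer
ones; elements of equal length coincide; every element is a proper suffix of `w`. -/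
theorem corrPos_suffix_structure {α : Type*} (w : List α) (hw : w ≠ []) :
    (∀ c₁ ∈ CorrPos w, ∀ c₂ ∈ CorrPos w, c₁.length < c₂.length →
      c₁ <:+ c₂ ∧ c₁ ≠ c₂) ∧
    (∀ c₁ ∈ CorrPos w, ∀ c₂ ∈ CorrPos w, c₁.length = c₂.length → c₁ = c₂) ∧
    (∀ c ∈ CorrPos w, c <:+ w ∧ c ≠ w) := by
  refine ⟨fun c₁ h₁ c₂ h₂ hlt => ?_, fun c₁ h₁ c₂ h₂ hlen => ?_, fun c hc => ?_⟩
  · have s₁ := corr_suffix w h₁.1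
    have s₂ := corr_suffix w h₂.1
    exact ⟨List.suffix_of_suffix_length_le s₁ s₂ (Nat.le_of_lt hlt),
      fun h => by simp [h] at hlt⟩
  · have s₁ := corr_suffix w h₁.1
    have s₂ := corr_suffix w h₂.1
    rcases List.suffix_of_suffix_length_le s₁ s₂ hlen.le with ⟨t, ht⟩
    have : t = [] := by
      have h := congrArg List.length ht
      rw [List.length_append, hlen] at h
      exact List.eq_nil_of_length_eq_zero (by omega)
    simpa [this] using ht
  · exact ⟨corr_suffix w hc.1, fun h => by
      have := hc.1.1; simp [h] at this⟩
end

section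
/- The prefix code K(w) generates the star of the autocorrelation set: every element of C∘(w) is a concatenation of elements of K(w), and consequently the Kleene stars coincide, K(w)* = (C∘(w))* = C(w)*. -/
lemma corr_quot {α : Type*} {w a b : List α} (ha : a ∈ Corr w)
    (hab : (a ++ b) ∈ Corr w) : b ∈ Corr w := by
  obtain ⟨hl1, f, hf⟩ := ha
  obtain ⟨hl2, e, he⟩ := hab
  refine ⟨lt_of_le_of_lt (by simp) hl2, e.drop f.length, ?_⟩
  have hfl : f.length = a.length := by
    have := congrArg List.length hf; simp at this; omega
  have hel : e.length = a.length + b.length := by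
    have := congrArg List.length he; simp at this; omega
  have key : f ++ (w ++ b) = e ++ w := by
    calc f ++ (w ++ b) = (f ++ w) ++ b := by simp
    _ = (w ++ a) ++ b := by rw [hf]
    _ = w ++ (a ++ b) := by simp
    _ = e ++ w := he
  have hfe : f = e.take f.length := by
    have := congrArg (List.take f.length) key
    rw [List.take_append_of_le_length (by omega),
        List.take_append_of_le_length (by omega)] at this
    simpa using this
  have hfd : e = f ++ e.drop f.length := by
    conv_lhs => rw [← List.take_append_drop f.length e, ← hfe]
  rw [hfd, List.append_assoc] at key
  exact List.append_cancel_left key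

lemma corrpos_decomp {α : Type*} (w : List α) :
    ∀ n, ∀ c ∈ CorrPos w, c.length ≤ n →
      ∃ S : List (List α), (∀ κ ∈ S, κ ∈ KCode w) ∧ c = S.flatten := by
  intro n
  induction n with
  | zero => intro c hc hlen
            exact absurd (List.length_eq_zero_iff.mp (Nat.le_zero.mp hlen)) hc.2
  | succ n ih =>
    intro c hc hlen
    by_cases hk : c ∈ KCode w
    · exact ⟨[c], by simpa using hk, by simp⟩
    · have hcc : c ∈ lconc (CorrPos w) (Aplus α) := by
        by_contra h; exact hk ⟨hc, h⟩
      obtain ⟨a, ha, b, hb, rfl⟩ := hcc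
      have hane : a ≠ [] := ha.2
      have hbc : b ∈ Corr w := corr_quot ha.1 hc.1
      have hbp : b ∈ CorrPos w := ⟨hbc, hb⟩
      have hal : 1 ≤ a.length := by
        cases a with | nil => exact absurd rfl hane | cons x t => simp
      have hbl : 1 ≤ b.length := by
        cases b with | nil => exact absurd rfl hb | cons x t => simp
      have hlen' : (a ++ b).length ≤ n + 1 := hlen
      simp at hlen'
      obtain ⟨Sa, hSa, hSa2⟩ := ih a ha (by omega)
      obtain ⟨Sb, hSb, hSb2⟩ := ih b hbp (by omega)
      refine ⟨Sa ++ Sb, ?_, ?_⟩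
      · intro κ hκ; rcases List.mem_append.mp hκ with h | h
        exacts [hSa κ h, hSb κ h]
      · rw [List.flatten_append, hSa2, hSb2]

/-- `K(w)` generates the star of the autocorrelation set:
every element of `C∘(w)` is a concatenation of elements of `K(w)`, and
`K(w)* = (C∘(w))* = C(w)*`. -/
theorem kcode_generates_star {α : Type*} (w : List α) (hw : w ≠ []) :
    (∀ c ∈ CorrPos w, ∃ S : List (List α), (∀ κ ∈ S, κ ∈ KCode w) ∧ c = S.flatten) ∧
    lstar (KCode w) = lstar (CorrPos w) ∧ lstar (CorrPos w) = lstar (Corr w) := by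
  have decomp : ∀ c ∈ CorrPos w, ∃ S : List (List α),
      (∀ κ ∈ S, κ ∈ KCode w) ∧ c = S.flatten :=
    fun c hc => corrpos_decomp w c.length c hc le_rfl
  refine ⟨decomp, ?_, ?_⟩
  · apply Set.Subset.antisymm
    · rintro x ⟨S, hS, rfl⟩
      exact ⟨S, fun y hy => (hS y hy).1, rfl⟩
    · rintro x ⟨S, hS, rfl⟩
      clear hw
      induction S with
      | nil => exact ⟨[], by simp⟩
      | cons y S ihS =>
        obtain ⟨T, hT, hT2⟩ := ihS (fun z hz => hS z (List.mem_cons_of_mem _ hz))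
        obtain ⟨Sy, hSy, hSy2⟩ := decomp y (hS y (List.mem_cons_self))
        refine ⟨Sy ++ T, ?_, ?_⟩
        · intro κ hκ; rcases List.mem_append.mp hκ with h | h
          exacts [hSy κ h, hT κ h]
        · simp [List.flatten_append, ← hSy2, ← hT2]
  · apply Set.Subset.antisymm
    · rintro x ⟨S, hS, rfl⟩
      exact ⟨S, fun y hy => (hS y hy).1, rfl⟩
    · rintro x ⟨S, hS, rfl⟩
      induction S with
      | nil => exact ⟨[], by simp⟩
      | cons y S ihS =>
        obtain ⟨T, hT, hT2⟩ := ihS (fun z hz => hS z (List.mem_cons_of_mem _ hz))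
        by_cases hy : y = []
        · exact ⟨T, hT, by simp [hy, hT2]⟩
        · refine ⟨y :: T, ?_, by simp [← hT2]⟩
          intro κ hκ; rcases List.mem_cons.mp hκ with rfl | h
          · exact ⟨hS κ (List.mem_cons_self), hy⟩
          · exact hT κ h
end

section
/- K(w) generates C(w)* unambiguously: if κ₁, …, κ_s and κ'₁, …, κ'_t are elements of K(w) with κ₁ ++ ⋯ ++ κ_s = κ'₁ ++ ⋯ ++ κ'_t, then s = t and κ_i = κ'_i for all i; i.e., every word of K(w)* has exactly one factorization into elements of K(w). -/
lemma kcode_ne_nil {α : Type*} {w : List α} {κ : List α} (h : κ ∈ KCode w) : κ ≠ [] :=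
  h.1.2

lemma kcode_prefix_free {α : Type*} {w : List α} {a b : List α}
    (ha : a ∈ KCode w) (hb : b ∈ KCode w) (hab : a <+: b) : a = b := by
  obtain ⟨c, rfl⟩ := hab
  rcases eq_or_ne c [] with rfl | hc
  · simp
  · exact absurd ⟨a, ha.1, c, hc, rfl⟩ hb.2

/-- `K(w)` generates `C(w)*` unambiguously: factorizations of a word
into elements of `K(w)` are unique. -/
theorem kcode_unique_factorization {α : Type*} (w : List α) (hw : w ≠ [])
    (S₁ S₂ : List (List α))
    (h₁ : ∀ κ ∈ S₁, κ ∈ KCode w) (h₂ : ∀ κ ∈ S₂, κ ∈ KCode w)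
    (heq : S₁.flatten = S₂.flatten) : S₁ = S₂ := by
  induction S₁ generalizing S₂ with
  | nil =>
    cases S₂ with
    | nil => rfl
    | cons b t =>
      exfalso
      have hb := kcode_ne_nil (h₂ b (by simp))
      simp at heq
      exact hb heq.1
  | cons a s ih =>
    cases S₂ with
    | nil =>
      exfalso
      have ha := kcode_ne_nil (h₁ a (by simp))
      simp at heq
      exact ha heq.1
    | cons b t =>
      simp only [List.flatten_cons] at heq
      have hpre : a <+: b ∨ b <+: a := by
        have h1 : a <+: a ++ s.flatten := List.prefix_append _ _
        have h2 : b <+: a ++ s.flatten := heq ▸ List.prefix_append _ _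
        exact List.prefix_or_prefix_of_prefix h1 h2
      have hab : a = b := by
        rcases hpre with h | h
        · exact kcode_prefix_free (h₁ a (by simp)) (h₂ b (by simp)) h
        · exact (kcode_prefix_free (h₂ b (by simp)) (h₁ a (by simp)) h).symm
      subst hab
      have heq' : s.flatten = t.flatten := by
        exact List.append_cancel_left heq
      rw [ih t (fun κ hκ => h₁ κ (by simp [hκ])) (fun κ hκ => h₂ κ (by simp [hκ])) heq']
end

section
/- The prefix code K(w) has a chain structure: there exist an integer k ≥ 0 and nonempty words q₁, q₂, …, q_k such that K(w) = { q_i ++ q_{i−1} ++ ⋯ ++ q₁ : 1 ≤ i ≤ k }; equivalently, the elements of K(w) can be listed in order of strictly increasing length so that each one is a proper suffix of the next. -/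
private lemma chain_aux {α : Type*} :
    ∀ (M : List (List α)) (b : List α),
      List.Chain' (fun a c : List α => a <:+ c ∧ a.length < c.length) (b :: M) →
      ∃ qs : List (List α), qs.length = M.length ∧ (∀ q ∈ qs, q ≠ []) ∧
        ∀ i (h : i < M.length), ((qs.take (i+1)).reverse).flatten ++ b = M.get ⟨i, h⟩
  | [], _, _ => ⟨[], rfl, by simp, fun i h => absurd h (by simp)⟩
  | c :: M', b, h => by
    change List.IsChain _ _ at h
    rw [List.isChain_cons_cons] at h
    obtain ⟨⟨⟨q, hq⟩, hlen⟩, hch⟩ := h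
    obtain ⟨qs', hlen', hne', hget'⟩ := chain_aux M' c hch
    refine ⟨q :: qs', by simp [hlen'], ?_, ?_⟩
    · intro x hx
      rcases List.mem_cons.1 hx with rfl | hx
      · rintro rfl; simp at hq; simp [hq] at hlen
      · exact hne' x hx
    · rintro (_ | i) hi
      · simpa using hq
      · have hi' : i < M'.length := by simpa using hi
        have := hget' i hi'
        simp only [List.take_succ_cons, List.reverse_cons, List.flatten_append,
          List.flatten_cons, List.flatten_nil, List.append_nil, List.append_assoc, hq]
        simpa using this

/-- chain structure of the prefix code: there are nonempty words
`q₁, …, q_k` with `K(w) = { q_i ++ q_{i-1} ++ ⋯ ++ q₁ : 1 ≤ i ≤ k }`. -/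
theorem kcode_chain_structure {α : Type*} (w : List α) (hw : w ≠ []) :
    ∃ qs : List (List α), (∀ q ∈ qs, q ≠ []) ∧
      KCode w = {v | ∃ i, 1 ≤ i ∧ i ≤ qs.length ∧ v = ((qs.take i).reverse).flatten} := by
  classical
  have hsuf : ∀ c ∈ KCode w, c <:+ w := by
    rintro c ⟨⟨⟨hlt, e, he⟩, -⟩, -⟩
    have h1 : c <:+ w ++ c := List.suffix_append w c
    have h2 : w <:+ e ++ w := List.suffix_append e w
    rw [he] at h1
    exact List.suffix_of_suffix_length_le h1 h2 hlt.le
  have hne : ∀ c ∈ KCode w, c ≠ [] := by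
    rintro c ⟨⟨-, hc⟩, -⟩; exact hc
  have htails : ∀ v : List α,
      v.tails.Pairwise (fun a c : List α => c <:+ a ∧ c.length < a.length) := by
    intro v
    induction v with
    | nil => simp
    | cons a v ih =>
      rw [List.tails_cons]
      refine List.Pairwise.cons ?_ ih
      intro b hb
      have hb' := (List.mem_tails _ _).1 hb
      refine ⟨hb'.trans (List.suffix_cons a v), ?_⟩
      have := hb'.length_le
      simp only [List.length_cons]
      omega
  set L : List (List α) := w.tails.filter (fun c => decide (c ∈ KCode w)) with hL
  have hmemL : ∀ c, c ∈ L ↔ c ∈ KCode w := by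
    intro c
    simp only [hL, List.mem_filter, decide_eq_true_iff, List.mem_tails]
    exact ⟨fun h => h.2, fun h => ⟨hsuf c h, h⟩⟩
  set M : List (List α) := L.reverse with hM
  have hmemM : ∀ c, c ∈ M ↔ c ∈ KCode w := by
    intro c; rw [hM, List.mem_reverse]; exact hmemL c
  have hpw : M.Pairwise (fun a c : List α => a <:+ c ∧ a.length < c.length) := by
    rw [hM, List.pairwise_reverse]
    exact List.Pairwise.filter _ (htails w)
  have hchain : List.Chain' (fun a c : List α => a <:+ c ∧ a.length < c.length) ([] :: M) := by
    change List.IsChain _ _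
    rw [List.isChain_cons]
    refine ⟨?_, hpw.isChain⟩
    intro y hy
    have hyM : y ∈ M := List.mem_of_mem_head? hy
    have hy' := hne y ((hmemM y).1 hyM)
    exact ⟨List.nil_suffix, by simpa [List.length_pos_iff] using hy'⟩
  obtain ⟨qs, hlenq, hneq, hget⟩ := chain_aux M [] hchain
  refine ⟨qs, hneq, ?_⟩
  ext v
  simp only [Set.mem_setOf_eq]
  constructor
  · intro hv
    obtain ⟨n, hn⟩ := List.mem_iff_get.1 ((hmemM v).2 hv)
    refine ⟨n + 1, by omega, by omega, ?_⟩
    have := hget n n.2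
    rw [List.append_nil] at this
    rw [this]
    exact hn.symm
  · rintro ⟨i, h1, h2, rfl⟩
    obtain ⟨j, rfl⟩ : ∃ j, i = j + 1 := ⟨i - 1, by omega⟩
    have hj : j < M.length := by omega
    have := hget j hj
    rw [List.append_nil] at this
    rw [this]
    exact (hmemM _).1 (List.get_mem M ⟨j, hj⟩)
end

section
/- K(w) is contained in the minimal language: K(w) ⊆ M(w). -/
/-- The minimal language `M(w)`: nonempty words `m` such that `w ++ m` ends with `w`
and every occurrence of `w` in `w ++ m` is at position `0` or at position `|m|`. -/
def MinLang {α : Type*} (w : List α) : Set (List α) :=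
  {m | m ≠ [] ∧ (∃ e, w ++ m = e ++ w) ∧
    ∀ i, occursAt w (w ++ m) i → i = 0 ∨ i = m.length}

/-- `K(w) ⊆ M(w)`. -/
theorem kcode_subset_minLang {α : Type*} (w : List α) (hw : w ≠ []) :
    KCode w ⊆ MinLang w := by
  rintro k ⟨⟨⟨hlen, e, he⟩, hne⟩, hnotc⟩
  refine ⟨hne, ⟨e, he⟩, ?_⟩
  rintro i ⟨x, y, hT, hx⟩
  by_contra h
  push_neg at h
  obtain ⟨h0, hk⟩ := h
  have hlens : w.length + k.length = i + (w.length + y.length) := by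
    have := congrArg List.length hT
    simp [hx] at this
    omega
  have hik : i < k.length := by
    rcases lt_or_ge i k.length with h' | h'
    · exact h'
    · exfalso; exact hk (by omega)
  have hilt : i < w.length := lt_trans hik hlen
  -- w ++ k.take i = x ++ w
  have hp1 : (w ++ k.take i) <+: (w ++ k) :=
    (List.prefix_append_right_inj w).mpr (List.take_prefix i k)
  have hp2 : (x ++ w) <+: (w ++ k) := by
    rw [hT]; simpa [List.append_assoc] using List.prefix_append (x ++ w) y
  have hlen2 : (w ++ k.take i).length = (x ++ w).length := by
    simp [hx, List.length_take]; omega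
  have heq : w ++ k.take i = x ++ w := by
    rcases List.prefix_of_prefix_length_le hp1 hp2 (le_of_eq hlen2) with hpp
    exact hpp.eq_of_length hlen2
  have hmem : k.take i ∈ CorrPos w := by
    refine ⟨⟨?_, x, heq⟩, ?_⟩
    · simp [List.length_take]; omega
    · simp only [Set.mem_singleton_iff]
      intro hcon
      have hl : (k.take i).length = i := by rw [List.length_take]; omega
      rw [hcon] at hl
      simp at hl
      omega
  exact hnotc ⟨k.take i, hmem, k.drop i, by
    simp [Aplus, List.drop_eq_nil_iff]; omega, by simp⟩
end

section
/- The minimal language meets the autocorrelation set exactly in the prefix code: M(w) ∩ C∘(w) = K(w). In particular, if v ∈ C∘(w) and v ∉ K(w), then v ∉ M(w). -/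
/-- `M(w) ∩ C∘(w) = K(w)`; in particular an element of `C∘(w)`
outside `K(w)` is not in `M(w)`. -/
theorem minLang_inter_corrPos {α : Type*} (w : List α) (hw : w ≠ []) :
    MinLang w ∩ CorrPos w = KCode w ∧
    (∀ v ∈ CorrPos w, v ∉ KCode w → v ∉ MinLang w) := by
  have key : MinLang w ∩ CorrPos w = KCode w := by
    ext v
    constructor
    · rintro ⟨⟨hne, ⟨e, he⟩, hocc⟩, hcp⟩
      refine ⟨hcp, ?_⟩
      rintro ⟨c, ⟨⟨hclen, e', he'⟩, hcne⟩, t, ht, rfl⟩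
      have hcne' : c ≠ [] := hcne
      have htne : t ≠ [] := ht
      have hocc' : occursAt w (w ++ (c ++ t)) c.length := by
        refine ⟨e', t, ?_, ?_⟩
        · rw [← List.append_assoc, he', List.append_assoc]
        · have := congrArg List.length he'
          simp at this
          omega
      rcases hocc _ hocc' with h0 | hlen
      · exact hcne' (List.length_eq_zero_iff.mp h0)
      · apply htne
        rw [List.length_append] at hlen
        exact List.length_eq_zero_iff.mp (by omega)
    · rintro ⟨⟨⟨hlen, e, he⟩, hne⟩, hnl⟩
      have hne' : v ≠ [] := hne
      refine ⟨⟨hne', ⟨e, he⟩, ?_⟩, ⟨⟨hlen, e, he⟩, hne⟩⟩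
      rintro i ⟨x, y, hxy, hx⟩
      have hle : i ≤ v.length := by
        have := congrArg List.length hxy
        simp at this
        omega
      by_contra hcon
      push_neg at hcon
      obtain ⟨h0, hv⟩ := hcon
      have hi : 0 < i := Nat.pos_of_ne_zero h0
      have hiv : i < v.length := lt_of_le_of_ne hle hv
      apply hnl
      have heq : w ++ v.take i = x ++ w := by
        have h1 : (w ++ v).take (w.length + i) = w ++ v.take i := by
          rw [List.take_append]
          simp
        have h2 : (x ++ w ++ y).take (w.length + i) = x ++ w := by
          have hxw : (x ++ w).length = w.length + i := by simp [hx]; omega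
          rw [List.take_append_of_le_length hxw.ge]
          exact List.take_of_length_le hxw.le
        rw [← h1, hxy, h2]
      refine ⟨v.take i, ⟨⟨?_, x, heq⟩, ?_⟩, v.drop i, ?_, ?_⟩
      · simp; omega
      · simp only [Set.mem_singleton_iff]
        intro h
        have h4 := congrArg List.length h
        rw [List.length_take] at h4
        simp only [List.length_nil] at h4
        omega
      · show v.drop i ≠ []
        intro h
        have := congrArg List.length h
        simp at this
        omega
      · simp
  refine ⟨key, fun v hv hnk hm => hnk ?_⟩
  rw [← key]
  exact ⟨hm, hv⟩
end

section
/- Every element of M(w) that does not belong to K(w) has w as a suffix; that is, M(w) \ K(w) ⊆ A*·{w}, so there is a language L with M(w) \ K(w) = L·{w}. -/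
/-- `M(w) \ K(w) ⊆ A*·{w}`, hence `M(w) \ K(w) = L·{w}` for
some language `L`. -/
theorem minLang_sdiff_kcode {α : Type*} (w : List α) (hw : w ≠ []) :
    MinLang w \ KCode w ⊆ lconc (Set.univ : Set (List α)) {w} ∧
    ∃ L : Set (List α), MinLang w \ KCode w = lconc L {w} := by
  have key : ∀ m ∈ MinLang w \ KCode w, ∃ a, m = a ++ w := by
    rintro m ⟨⟨hm0, ⟨e, he⟩, hmin⟩, hK⟩
    have hlen : e.length = m.length := by
      have := congrArg List.length he
      simp at this; omega
    by_cases hlw : w.length ≤ m.length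
    · -- w is a suffix of m
      refine ⟨e.drop w.length, ?_⟩
      have h1 : m = (w ++ m).drop w.length := by simp
      rw [h1, he, List.drop_append_of_le_length (by omega)]
    · -- |m| < |w|: derive m ∈ KCode w, contradiction
      exfalso
      apply hK
      have hmC : m ∈ CorrPos w := ⟨⟨by omega, ⟨e, he⟩⟩, hm0⟩
      refine ⟨hmC, ?_⟩
      rintro ⟨c, ⟨⟨hclen, e', he'⟩, hc0⟩, a, ha, hma⟩
      have hce : e'.length = c.length := by
        have := congrArg List.length he'
        simp at this; omega
      have hocc : occursAt w (w ++ m) c.length := by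
        refine ⟨e', a, ?_, hce⟩
        rw [hma, ← List.append_assoc, he', List.append_assoc]
      rcases hmin _ hocc with h | h
      · exact hc0 (List.length_eq_zero_iff.mp h)
      · have : a.length ≠ 0 := fun h => ha (List.length_eq_zero_iff.mp h)
        have := congrArg List.length hma
        simp at this; omega
  constructor
  · intro m hm
    obtain ⟨a, rfl⟩ := key m hm
    exact ⟨a, trivial, w, rfl, rfl⟩
  · refine ⟨{a | a ++ w ∈ MinLang w \ KCode w}, Set.ext fun m => ⟨?_, ?_⟩⟩
    · intro hm
      obtain ⟨a, rfl⟩ := key m hm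
      exact ⟨a, hm, w, rfl, rfl⟩
    · rintro ⟨a, ha, b, rfl, rfl⟩
      exact ha
end

section
/- The fundamental clump decomposition of texts holds as a language identity: A* = N(w) ∪ R(w)·(C∘(w))*·( (M(w) \ K(w))·(C∘(w))* )*·U(w), where A* is the set of all words over α. -/
/-- The "Right" language `R(w)`: words in which `w` occurs exactly once,
at the right extremity. -/
def RightLang {α : Type*} (w : List α) : Set (List α) :=
  {r | occursAt w r (r.length - w.length) ∧
    ∀ i, occursAt w r i → i = r.length - w.length}

/-- The "Ultimate" language `U(w)`: words `u` such that the only occurrence of `w`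
in `w ++ u` is at position `0`. -/
def UltLang {α : Type*} (w : List α) : Set (List α) :=
  {u | ∀ i, occursAt w (w ++ u) i → i = 0}

/-- The "Not" language `N(w)`: words with no occurrence of `w`. -/
def NotLang {α : Type*} (w : List α) : Set (List α) :=
  {t | ∀ i, ¬ occursAt w t i}

section Aux
variable {α : Type*}

private lemma occ_len {w T : List α} {i : ℕ} (h : occursAt w T i) :
    i + w.length ≤ T.length := by
  obtain ⟨x, y, hT, hx⟩ := h
  have := congrArg List.length hT
  simp at this
  omega

private lemma occ_append_left {w x y : List α} {j : ℕ} (h : occursAt w y j) :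
    occursAt w (x ++ y) (x.length + j) := by
  obtain ⟨a, b, hT, ha⟩ := h
  exact ⟨x ++ a, b, by simp [hT], by simp [ha]⟩

private lemma occ_of_suffix {w x y : List α} {i : ℕ} (h : occursAt w (x ++ y) i)
    (hle : x.length ≤ i) : occursAt w y (i - x.length) := by
  obtain ⟨a, b, hT, ha⟩ := h
  have hxa : x.length ≤ a.length := ha ▸ hle
  have h2 : y = a.drop x.length ++ w ++ b := by
    have := congrArg (List.drop x.length) hT
    rw [List.drop_left, List.append_assoc, List.drop_append_of_le_length hxa] at this
    simpa [List.append_assoc] using this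
  refine ⟨a.drop x.length, b, h2, ?_⟩
  simp [ha]

private lemma exists_greatest {P : ℕ → Prop} (n : ℕ) (hbd : ∀ k, P k → k ≤ n)
    (h : ∃ k, P k) : ∃ m, P m ∧ ∀ k, P k → k ≤ m := by
  classical
  obtain ⟨k, hk⟩ := h
  exact ⟨Nat.findGreatest P n, Nat.findGreatest_spec (hbd k hk) hk,
    fun j hj => Nat.le_findGreatest (hbd j hj) hj⟩

/-- star of a union splits as `X* · (Y·X*)*`. -/
private lemma star_union_split (X Y : Set (List α)) :
    ∀ S : List (List α), (∀ m ∈ S, m ∈ X ∪ Y) →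
      ∃ a b, a ∈ lstar X ∧ b ∈ lstar (lconc Y (lstar X)) ∧ S.flatten = a ++ b := by
  intro S
  induction S with
  | nil => exact fun _ => ⟨[], [], ⟨[], by simp⟩, ⟨[], by simp⟩, by simp⟩
  | cons h t ih =>
    intro hmem
    obtain ⟨a, b, ⟨SA, hSA, hA⟩, ⟨SB, hSB, hB⟩, hab⟩ := ih (fun m hm => hmem m (by simp [hm]))
    rcases hmem h (by simp) with hX | hY
    · refine ⟨h ++ a, b, ⟨h :: SA, ?_, by simp [hA]⟩,
        ⟨SB, hSB, hB⟩, by simp [hab, List.append_assoc]⟩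
      intro y hy
      rcases List.mem_cons.1 hy with rfl | hy
      · exact hX
      · exact hSA y hy
    · refine ⟨[], (h ++ a) ++ b, ⟨[], by simp⟩,
        ⟨(h ++ a) :: SB, ?_, by simp [hB]⟩, by simp [hab, List.append_assoc]⟩
      intro y hy
      rcases List.mem_cons.1 hy with rfl | hy
      · exact ⟨h, hY, a, ⟨SA, hSA, hA⟩, rfl⟩
      · exact hSB y hy

/-- words ending in `w` decompose as `R(w) · M(w)*`. -/
private lemma claimA (w : List α) (hw : w ≠ []) :
    ∀ n T, (T : List α).length = n → (∃ e, T = e ++ w) →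
      ∃ (r : List α) (S : List (List α)),
        r ∈ RightLang w ∧ (∀ m ∈ S, m ∈ MinLang w) ∧ T = r ++ S.flatten := by
  intro n
  induction n using Nat.strong_induction_on with
  | _ n ih =>
    rintro T rfl ⟨e, rfl⟩
    have hocc_e : occursAt w (e ++ w) e.length := ⟨e, [], by simp, rfl⟩
    by_cases hq : ∃ q, occursAt w (e ++ w) q ∧ q < e.length
    · obtain ⟨q, ⟨hq_occ, hq_lt⟩, hq_max⟩ :=
        exists_greatest e.length (fun k hk => hk.2.le) hq
      obtain ⟨x, y, hT, hx⟩ := hq_occ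
      have hT' : e ++ w = x ++ (w ++ y) := by rw [hT, List.append_assoc]
      have hy_len : y.length = e.length - q := by
        have := congrArg List.length hT
        simp [← hx] at this ⊢; omega
      have hy_ne : y ≠ [] := by
        intro h; rw [h] at hy_len; simp at hy_len; omega
      have hwy : w ++ y = e.drop q ++ w := by
        calc w ++ y = (x ++ (w ++ y)).drop x.length := List.drop_left.symm
          _ = (e ++ w).drop q := by rw [← hT', hx]
          _ = e.drop q ++ w := List.drop_append_of_le_length hq_lt.le
      have hyM : y ∈ MinLang w := by
        refine ⟨hy_ne, ⟨e.drop q, hwy⟩, fun i hi => ?_⟩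
        have hocc : occursAt w (e ++ w) (q + i) := by
          have := occ_append_left (x := x) hi
          rw [← hT', hx] at this
          exact this
        have hbd : i + w.length ≤ w.length + y.length := by
          simpa using occ_len hi
        have hiy : i ≤ y.length := by omega
        by_cases hlt : q + i < e.length
        · have := hq_max (q + i) ⟨hocc, hlt⟩
          omega
        · right; omega
      have hlen_lt : (x ++ w).length < (e ++ w).length := by
        simp [hx]
        have : 0 < y.length := List.length_pos_iff.2 hy_ne
        omega
      obtain ⟨r, S, hr, hS, hdec⟩ := ih (x ++ w).length hlen_lt (x ++ w) rfl ⟨x, rfl⟩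
      refine ⟨r, S ++ [y], hr, ?_, ?_⟩
      · intro m hm
        rcases List.mem_append.1 hm with hm | hm
        · exact hS m hm
        · simp at hm; subst hm; exact hyM
      · rw [hT, hdec]; simp [List.append_assoc]
    · push_neg at hq
      refine ⟨e ++ w, [], ⟨?_, ?_⟩, by simp, by simp⟩
      · simpa using hocc_e
      · intro i hi
        have h1 := occ_len hi
        have h2 := hq i hi
        simp at h1 ⊢
        omega

end Aux

/-- the fundamental clump decomposition
`A* = N(w) ∪ R(w)·(C∘(w))*·((M(w) \ K(w))·(C∘(w))*)*·U(w)`. -/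
theorem clump_decomposition {α : Type*} (w : List α) (hw : w ≠ []) :
    (Set.univ : Set (List α)) =
      NotLang w ∪
        lconc
          (lconc (lconc (RightLang w) (lstar (CorrPos w)))
            (lstar (lconc (MinLang w \ KCode w) (lstar (CorrPos w)))))
          (UltLang w) := by
  classical
  ext T
  simp only [Set.mem_univ, true_iff]
  by_cases hN : ∀ i, ¬ occursAt w T i
  · exact Or.inl hN
  right
  push_neg at hN
  obtain ⟨p, hp, hp_max⟩ :=
    exists_greatest T.length (fun k hk => le_trans (Nat.le_add_right _ _) (occ_len hk)) hN
  obtain ⟨x, y, hT, hx⟩ := hp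
  -- the right part `y ∈ UltLang w`
  have hyU : y ∈ UltLang w := by
    intro j hj
    have hocc : occursAt w T (x.length + j) := by
      rw [hT, List.append_assoc]
      exact occ_append_left hj
    have := hp_max _ hocc
    omega
  -- decompose `x ++ w` as `R(w) · M(w)*`
  obtain ⟨r, S, hr, hS, hdec⟩ := claimA w hw (x ++ w).length (x ++ w) rfl ⟨x, rfl⟩
  -- split `M(w)` elements into `CorrPos` and `MinLang \ KCode`
  have hmem : ∀ m ∈ S, m ∈ CorrPos w ∪ (MinLang w \ KCode w) := by
    intro m hm
    by_cases hK : m ∈ KCode w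
    · exact Or.inl hK.1
    · exact Or.inr ⟨hS m hm, hK⟩
  obtain ⟨a, b, ha, hb, hab⟩ := star_union_split (CorrPos w) (MinLang w \ KCode w) S hmem
  refine ⟨(r ++ a) ++ b, ⟨r ++ a, ⟨r, hr, a, ha, rfl⟩, b, hb, rfl⟩, y, hyU, ?_⟩
  rw [hT, hdec, hab]
  simp [List.append_assoc]
end

section
/- A clump built from m elements of the prefix code contains exactly m+1 occurrences: for any κ₁, …, κ_m ∈ K(w), the word v = w ++ κ₁ ++ ⋯ ++ κ_m contains exactly m+1 occurrences of w, namely at the positions |w ++ κ₁ ++ ⋯ ++ κ_i| − |w| for i = 0, 1, …, m, and at no other position. -/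
/-- flatten of corr words keeps w as suffix -/
lemma flatten_corr_suffix {α : Type*} (w : List α) :
    ∀ κs : List (List α), (∀ κ ∈ κs, ∃ e, w ++ κ = e ++ w) →
    ∃ e : List α, w ++ κs.flatten = e ++ w ∧ e.length = κs.flatten.length := by
  intro κs
  induction κs with
  | nil => intro _; exact ⟨[], by simp⟩
  | cons κ κs ih =>
    intro h
    obtain ⟨e1, he1⟩ := h κ (by simp)
    obtain ⟨e, he, hel⟩ := ih (fun κ' hκ' => h κ' (by simp [hκ']))
    refine ⟨e1 ++ e, ?_, ?_⟩
    · calc w ++ (κ :: κs).flatten = (w ++ κ) ++ κs.flatten := by simp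
        _ = e1 ++ (w ++ κs.flatten) := by rw [he1]; simp
        _ = (e1 ++ e) ++ w := by rw [he]; simp
    · have : w.length + κ.length = e1.length + w.length := by
        have := congrArg List.length he1; simpa using this
      simp only [List.length_append, List.flatten_cons, hel]
      omega

/-- overlap lemma: two occurrences at shifted positions give a correlation word -/
lemma overlap_corr {α : Type*} {w x x' y y' : List α}
    (h : x ++ w ++ y = x' ++ w ++ y')
    (hlt : x.length < x'.length) (hup : x'.length < x.length + w.length) :
    y.take (x'.length - x.length) ∈ CorrPos w := by
  set d := x'.length - x.length with hd
  have hxp : x <+: x' :=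
    List.prefix_of_prefix_length_le ⟨w ++ y, by simpa using h⟩ ⟨w ++ y', rfl⟩ hlt.le
  obtain ⟨e, rfl⟩ := hxp
  have hde : e.length = d := by simp [hd, List.length_append]
  have h2 : w ++ y = e ++ w ++ y' := by
    have := h
    rw [List.append_assoc x e, List.append_assoc, List.append_assoc,
      List.append_assoc] at this
    have := List.append_cancel_left this
    simpa [List.append_assoc] using this
  have hylen : d ≤ y.length := by
    have := congrArg List.length h2
    simp only [List.length_append] at this
    omega
  have h2' : w ++ y = (e ++ w) ++ y' := by rw [h2, List.append_assoc]
  have L : (w ++ y).take (w.length + d) = w ++ y.take d := by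
    rw [List.take_append,
      List.take_of_length_le (Nat.le_add_right _ _)]
    congr 2
    omega
  have R : ((e ++ w) ++ y').take (w.length + d) = e ++ w := by
    rw [List.take_append_of_le_length (by simp [hde]; omega),
      List.take_of_length_le (by simp [hde]; omega)]
  have hkey : w ++ y.take d = e ++ w := by
    rw [← L, h2', R]
  have hdlt : d < w.length := by omega
  have hdpos : 0 < d := by omega
  refine ⟨⟨?_, e, hkey⟩, ?_⟩
  · rw [List.length_take]; omega
  · simp only [Set.mem_singleton_iff]
    intro hnil
    have hl : min d y.length = 0 := by simpa using congrArg List.length hnil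
    omega

lemma occ_backward {α : Type*} (w : List α) (κs : List (List α))
    (hκ : ∀ κ ∈ κs, κ ∈ KCode w) (t : ℕ) (ht : t ≤ κs.length) :
    occursAt w (w ++ κs.flatten) ((κs.take t).flatten.length) := by
  obtain ⟨e, he, hel⟩ := flatten_corr_suffix w (κs.take t)
    (fun κ hmem => (hκ κ (List.mem_of_mem_take hmem)).1.1.2)
  refine ⟨e, (κs.drop t).flatten, ?_, hel⟩
  calc w ++ κs.flatten = w ++ (κs.take t ++ κs.drop t).flatten := by
        rw [List.take_append_drop]
    _ = (w ++ (κs.take t).flatten) ++ (κs.drop t).flatten := by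
        rw [List.flatten_append]; simp [List.append_assoc]
    _ = e ++ w ++ (κs.drop t).flatten := by rw [he]

lemma occ_forward {α : Type*} (w : List α) (hw : w ≠ []) :
    ∀ κs : List (List α), (∀ κ ∈ κs, κ ∈ KCode w) →
    ∀ i, occursAt w (w ++ κs.flatten) i →
    ∃ t, t ≤ κs.length ∧ i = (κs.take t).flatten.length := by
  intro κs
  induction κs with
  | nil =>
    rintro _ i ⟨x, y, hT, hx⟩
    have := congrArg List.length hT
    simp only [List.flatten_nil, List.append_nil, List.length_append] at this
    exact ⟨0, by omega, by simp; omega⟩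
  | cons κ κs ih =>
    rintro h i ⟨x, y, hT, hx⟩
    have hκ0 := h κ (by simp)
    obtain ⟨⟨⟨hκlt, e1, he1⟩, hκne⟩, hκnc⟩ := hκ0
    simp only [List.flatten_cons] at hT
    rcases Nat.lt_trichotomy i κ.length with hi | hi | hi
    · rcases Nat.eq_zero_or_pos i with hi0 | hipos
      · exact ⟨0, by simp, by simp [hi0]⟩
      · exfalso
        -- occurrence at 0 and at i overlap within κ
        have hocc0 : [] ++ w ++ (κ ++ κs.flatten) = x ++ w ++ y := by
          simpa [List.append_assoc] using hT
        have hc := overlap_corr hocc0 (by simp only [List.length_nil]; omega)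
          (by simp only [List.length_nil]; omega)
        simp only [List.length_nil, Nat.sub_zero, List.length_append] at hc
        rw [hx] at hc
        rw [List.take_append_of_le_length hi.le] at hc
        refine hκnc ⟨κ.take i, hc, κ.drop i, ?_, by rw [List.take_append_drop]⟩
        simp only [Aplus, Set.mem_setOf_eq, ne_eq, List.drop_eq_nil_iff]
        omega
    · exact ⟨1, by simp, by simp [hi]⟩
    · -- i ≥ |κ| (strictly bigger, but ≥ works): shift past e1
      have hT2 : x ++ w ++ y = e1 ++ (w ++ κs.flatten) := by
        rw [← hT, ← List.append_assoc, he1, List.append_assoc]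
      have he1len : e1.length = κ.length := by
        have := congrArg List.length he1; simp at this; omega
      have hpre : e1 <+: x :=
        List.prefix_of_prefix_length_le ⟨w ++ κs.flatten, hT2.symm⟩
          ⟨w ++ y, by simp [List.append_assoc]⟩ (by omega)
      obtain ⟨x2, rfl⟩ := hpre
      have hT3 : x2 ++ w ++ y = w ++ κs.flatten := by
        rw [List.append_assoc, List.append_assoc] at hT2
        have := List.append_cancel_left hT2
        simpa [List.append_assoc] using this
      obtain ⟨t, ht, hteq⟩ := ih (fun κ' h' => h κ' (by simp [h'])) x2.length
        ⟨x2, y, hT3.symm, rfl⟩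
      refine ⟨t + 1, by simp only [List.length_cons]; omega, ?_⟩
      simp only [List.length_append] at hx
      simp only [List.take_succ_cons, List.flatten_cons, List.length_append]
      omega

lemma pos_strictmono {α : Type*} (w : List α) (κs : List (List α))
    (hκ : ∀ κ ∈ κs, κ ∈ KCode w) {a b : ℕ} (hab : a < b) (hb : b ≤ κs.length) :
    (κs.take a).flatten.length < (κs.take b).flatten.length := by
  have hsplit : κs.take b = κs.take a ++ (κs.drop a).take (b - a) := by
    rw [← List.take_add]; congr 1; omega
  rw [hsplit, List.flatten_append, List.length_append]
  have hne : (κs.drop a).take (b - a) ≠ [] := by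
    rw [← List.length_pos_iff, List.length_take, List.length_drop]
    omega
  obtain ⟨s, L, hsL⟩ := List.exists_cons_of_ne_nil hne
  have hs : s ∈ κs := by
    apply List.mem_of_mem_drop (i := a)
    apply List.mem_of_mem_take (i := b - a)
    rw [hsL]; simp
  have hsne : s ≠ [] := (hκ s hs).1.2
  have : 0 < ((κs.drop a).take (b - a)).flatten.length := by
    rw [hsL]
    simp only [List.flatten_cons, List.length_append]
    have : 0 < s.length := List.length_pos_iff.mpr hsne
    omega
  omega


/-- for `κ₁, …, κ_m ∈ K(w)`, the word `w ++ κ₁ ++ ⋯ ++ κ_m` has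
exactly `m + 1` occurrences of `w`, namely at the positions
`|w ++ κ₁ ++ ⋯ ++ κ_t| − |w|` for `t = 0, …, m`, and at no other position. -/
theorem clump_occurrence_positions {α : Type*} (w : List α) (hw : w ≠ [])
    (κs : List (List α)) (hκ : ∀ κ ∈ κs, κ ∈ KCode w) :
    (∀ i, occursAt w (w ++ κs.flatten) i ↔
      ∃ t, t ≤ κs.length ∧ i = (w ++ (κs.take t).flatten).length - w.length) ∧
    {i | occursAt w (w ++ κs.flatten) i}.ncard = κs.length + 1 := by
  have hsimp : ∀ t, (w ++ (κs.take t).flatten).length - w.length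
      = (κs.take t).flatten.length := by
    intro t; simp
  have hiff : ∀ i, occursAt w (w ++ κs.flatten) i ↔
      ∃ t, t ≤ κs.length ∧ i = (κs.take t).flatten.length := by
    intro i
    constructor
    · exact occ_forward w hw κs hκ i
    · rintro ⟨t, ht, rfl⟩; exact occ_backward w κs hκ t ht
  constructor
  · intro i
    simp only [hsimp]
    exact hiff i
  · have hset : {i | occursAt w (w ++ κs.flatten) i}
        = ↑((Finset.Iic κs.length).image (fun t => (κs.take t).flatten.length)) := by
      ext i
      simp only [Set.mem_setOf_eq, Finset.coe_image, Set.mem_image, Finset.mem_coe,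
        Finset.mem_Iic, hiff i]
      constructor
      · rintro ⟨t, ht, rfl⟩; exact ⟨t, ht, rfl⟩
      · rintro ⟨t, ht, rfl⟩; exact ⟨t, ht, rfl⟩
    rw [hset, Set.ncard_coe_finset, Finset.card_image_of_injOn, Nat.card_Iic]
    intro a ha b hb hab
    simp only [Finset.coe_Iic, Set.mem_Iic] at ha hb
    by_contra hne
    rcases Nat.lt_or_ge a b with hlt | hge
    · exact absurd hab (Nat.ne_of_lt (pos_strictmono w κs hκ hlt hb))
    · have hlt : b < a := by omega
      exact absurd hab.symm (Nat.ne_of_lt (pos_strictmono w κs hκ hlt ha))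
end

section
/- Overlapping occurrences correspond exactly to autocorrelation extensions: for a nonempty word w, a word c ∈ C∘(w), a word T and a position i, one has (w occurs at position i in T and w occurs at position i + |c| in T) if and only if the word w ++ c occurs at position i in T. -/
lemma suffix_eq_of_length' {α : Type*} {s₁ s₂ l : List α} (h₁ : s₁ <:+ l) (h₂ : s₂ <:+ l)
    (h : s₁.length = s₂.length) : s₁ = s₂ := by
  have p₁ : s₁.reverse <+: l.reverse := List.reverse_prefix.mpr h₁
  have p₂ : s₂.reverse <+: l.reverse := List.reverse_prefix.mpr h₂
  have := List.prefix_of_prefix_length_le p₁ p₂ (by simp [h])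
  have := this.eq_of_length (by simp [h])
  simpa using congrArg List.reverse this

lemma suffix_of_suffix_append {α : Type*} {s e w : List α} (h : s <:+ e ++ w)
    (hl : s.length ≤ w.length) : s <:+ w := by
  have p₁ : s.reverse <+: w.reverse ++ e.reverse := by
    have := List.reverse_prefix.mpr h
    simpa using this
  have p₂ : w.reverse <+: w.reverse ++ e.reverse := List.prefix_append _ _
  have := List.prefix_of_prefix_length_le p₁ p₂ (by simpa using hl)
  exact List.reverse_prefix.mp this

/-- for `c ∈ C∘(w)`, `w` occurs at positions `i` and `i + |c|` in `T`
iff `w ++ c` occurs at position `i` in `T`. -/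
theorem overlap_iff_corr_extension {α : Type*} (w : List α) (hw : w ≠ [])
    (c : List α) (hc : c ∈ CorrPos w) (T : List α) (i : ℕ) :
    (occursAt w T i ∧ occursAt w T (i + c.length)) ↔ occursAt (w ++ c) T i := by
  obtain ⟨⟨hlen, e, he⟩, hcne⟩ := hc
  have helen : e.length = c.length := by
    have := congrArg List.length he; simp at this; omega
  constructor
  · rintro ⟨⟨x, y, hT, hx⟩, ⟨x', y', hT', hx'⟩⟩
    have px : x <+: T := ⟨w ++ y, by simp [hT]⟩
    have px' : x' <+: T := ⟨w ++ y', by simp [hT']⟩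
    obtain ⟨f, hf⟩ := List.prefix_of_prefix_length_le px px' (by omega)
    have hflen : f.length = c.length := by
      have := congrArg List.length hf; simp at this; omega
    have key : w ++ y = f ++ (w ++ y') := by
      have h1 : x ++ (w ++ y) = x ++ (f ++ (w ++ y')) := by
        have := hT.symm.trans hT'
        rw [← hf] at this
        simpa [List.append_assoc] using this
      exact List.append_cancel_left h1
    have hylen : y.length = c.length + y'.length := by
      have := congrArg List.length key; simp at this; omega
    set d : List α := y.take c.length with hd
    have hdlen : d.length = c.length := by
      simp [hd]; omega
    have hfw : f ++ w = w ++ d := by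
      have h2 : (w ++ y).take (c.length + w.length) = w ++ d := by
        rw [show c.length + w.length = w.length + c.length by omega]
        simp [List.take_append, hd]
      have h3 : (f ++ (w ++ y')).take (c.length + w.length) = f ++ w := by
        rw [show c.length + w.length = f.length + w.length by omega]
        simp [List.take_append]
      rw [← h3, ← key, h2]
    have hdsuf : d <:+ w := by
      apply suffix_of_suffix_append (e := f) (w := w)
      · rw [hfw]; exact List.suffix_append _ _
      · omega
    have hcsuf : c <:+ w := by
      apply suffix_of_suffix_append (e := e) (w := w)
      · rw [← he]; exact List.suffix_append _ _
      · omega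
    have hdc : d = c := suffix_eq_of_length' hdsuf hcsuf (by omega)
    refine ⟨x, y', ?_, hx⟩
    rw [hT', ← hf]
    rw [List.append_assoc x f, hfw, hdc]
  · rintro ⟨x, y, hT, hx⟩
    constructor
    · exact ⟨x, c ++ y, by rw [hT]; simp, hx⟩
    · refine ⟨x ++ e, y, ?_, by simp [hx, helen]⟩
      rw [hT, he]
      simp [List.append_assoc]
end

section
/- In the Bernoulli model, for a nonempty word w, a word c ∈ C∘(w), and a position i with i + |w| + |c| ≤ n, the probability that a random text of length n has an occurrence of w at position i and an occurrence of w at position i + |c| equals π(w)·π(c). -/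
lemma occursAt_iff_getElem {α : Type*} (v L : List α) (i : ℕ) (h : i + v.length ≤ L.length) :
    occursAt v L i ↔ ∀ j (hj : j < v.length), L[i + j]'(by omega) = v[j] := by
  constructor
  · rintro ⟨x, y, rfl, rfl⟩
    intro j hj
    rw [List.getElem_append, dif_pos (by simp; omega), List.getElem_append,
      dif_neg (by omega)]
    congr 1
    omega
  · intro hget
    refine ⟨L.take i, L.drop (i + v.length), ?_, by simp; omega⟩
    have hv : v = (L.drop i).take v.length := by
      apply List.ext_getElem
      · simp; omega
      · intro j hj hj2
        rw [List.getElem_take, List.getElem_drop]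
        exact (hget j hj).symm
    conv_lhs => rw [← List.take_append_drop i L]
    rw [List.append_assoc]
    congr 1
    conv_lhs => rw [← List.take_append_drop v.length (L.drop i)]
    rw [List.drop_drop, ← hv]

open Classical in
lemma sum_occurs {α : Type*} [Fintype α] (p : α → ℝ) (hsum : ∑ a, p a = 1)
    (v : List α) (n i : ℕ) (h : i + v.length ≤ n) :
    ∑ T : Fin n → α, (if occursAt v (List.ofFn T) i then ∏ j, p (T j) else 0)
      = (v.map p).prod := by
  classical
  set f : Fin n → α → ℝ := fun j a =>
    if hj : i ≤ j.val ∧ j.val < i + v.length then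
      (if a = v[j.val - i]'(by omega) then p a else 0) else p a with hf
  have hT : ∀ T : Fin n → α,
      (if occursAt v (List.ofFn T) i then ∏ j, p (T j) else 0) = ∏ j, f j (T j) := by
    intro T
    have hlen : i + v.length ≤ (List.ofFn T).length := by simpa using h
    rw [if_congr (occursAt_iff_getElem v (List.ofFn T) i hlen) rfl rfl]
    by_cases hocc : ∀ j (hj : j < v.length), (List.ofFn T)[i + j]'(by simp; omega) = v[j]
    · rw [if_pos hocc]
      refine Finset.prod_congr rfl fun j _ => ?_
      by_cases hj : i ≤ j.val ∧ j.val < i + v.length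
      · have h1 : T j = v[j.val - i]'(by omega) := by
          have := hocc (j.val - i) (by omega)
          rw [List.getElem_ofFn] at this
          have hje : (⟨i + (j.val - i), by omega⟩ : Fin n) = j := by
            ext; simp; omega
          rwa [hje] at this
        rw [hf]
        simp only [dif_pos hj, if_pos h1]
      · rw [hf]; simp only [dif_neg hj]
    · rw [if_neg hocc]
      push_neg at hocc
      obtain ⟨j, hj, hne⟩ := hocc
      refine (Finset.prod_eq_zero (Finset.mem_univ (⟨i + j, by omega⟩ : Fin n)) ?_).symm
      rw [hf]
      have hw : i ≤ i + j ∧ i + j < i + v.length := by omega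
      simp only [dif_pos hw]
      rw [if_neg]
      intro hcon
      apply hne
      rw [List.getElem_ofFn]
      convert hcon using 2
      omega
  calc ∑ T : Fin n → α, (if occursAt v (List.ofFn T) i then ∏ j, p (T j) else 0)
      = ∑ T : Fin n → α, ∏ j, f j (T j) := Finset.sum_congr rfl fun T _ => hT T
    _ = ∏ j : Fin n, ∑ a, f j a := by
        rw [Finset.prod_univ_sum]
        rw [Fintype.piFinset_univ]
    _ = (v.map p).prod := by
        have hg : ∀ j : Fin n, (∑ a, f j a) =
            if hj : i ≤ j.val ∧ j.val < i + v.length then p (v[j.val - i]'(by omega)) else 1 := by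
          intro j
          by_cases hj : i ≤ j.val ∧ j.val < i + v.length
          · rw [dif_pos hj]
            rw [hf]
            simp only [dif_pos hj]
            rw [Finset.sum_ite_eq' Finset.univ (v[j.val - i]'(by omega)) p]
            simp
          · rw [dif_neg hj, hf]
            simp only [dif_neg hj]
            exact hsum
        rw [Finset.prod_congr rfl fun j _ => hg j]
        set e : Fin v.length → Fin n := fun k => ⟨i + k, by omega⟩ with he
        have hinj : Function.Injective e := by
          intro a b hab
          simp only [he, Fin.mk.injEq] at hab
          ext; omega
        rw [← Finset.prod_subset (Finset.subset_univ (Finset.univ.image e))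
          (fun x _ hx => by
            rw [dif_neg]
            intro hcon
            exact hx (Finset.mem_image.2 ⟨⟨x.val - i, by omega⟩, Finset.mem_univ _,
              by simp [he]; ext; simp; omega⟩))]
        rw [Finset.prod_image (fun a _ b _ hab => hinj hab)]
        have : ∀ k : Fin v.length,
            (if hj : i ≤ (e k).val ∧ (e k).val < i + v.length
              then p (v[(e k).val - i]'(by omega)) else 1) = p (v[k.val]) := by
          intro k
          rw [dif_pos (by simp only [he]; omega)]
          congr 1
          simp [he]
        rw [Finset.prod_congr rfl fun k _ => this k]
        have hv : v.map p = List.ofFn fun k : Fin v.length => p (v[k.val]) := by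
          conv_lhs => rw [← List.ofFn_getElem (xs := v)]
          rw [List.map_ofFn]
          rfl
        rw [hv, List.prod_ofFn]

open Classical in
/-- Bernoulli model: for `c ∈ C∘(w)` and `i + |w| + |c| ≤ n`, the
probability that a random text of length `n` has occurrences of `w` at positions
`i` and `i + |c|` equals `π(w)·π(c)`, where `π(v) = ∏_j p(v_j)`. -/
theorem bernoulli_overlap_probability {α : Type*} [Fintype α] (p : α → ℝ)
    (hp : ∀ a, 0 ≤ p a) (hsum : ∑ a, p a = 1)
    (w c : List α) (hw : w ≠ []) (hc : c ∈ CorrPos w)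
    (n i : ℕ) (hn : i + w.length + c.length ≤ n) :
    ∑ T : Fin n → α,
      (if occursAt w (List.ofFn T) i ∧ occursAt w (List.ofFn T) (i + c.length)
        then ∏ j, p (T j) else 0)
    = (w.map p).prod * (c.map p).prod := by
  obtain ⟨⟨hlen, e, he⟩, -⟩ := hc
  have helen : e.length = c.length := by
    have := congrArg List.length he
    simp at this
    omega
  have hwc : ∀ (k : ℕ) (hk : k < w.length + c.length),
      (w ++ c)[k]'(by simp; omega) = (e ++ w)[k]'(by simp; omega) :=
    fun k hk => List.getElem_of_eq he _
  have hce : ∀ (k : ℕ) (h1 : w.length ≤ k) (h2 : k < w.length + c.length),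
      (c)[k - w.length]'(by omega) = w[k - c.length]'(by omega) := by
    intro k h1 h2
    have h3 := hwc k h2
    rw [List.getElem_append, dif_neg (by omega), List.getElem_append, dif_neg (by omega)] at h3
    rw [h3]
    congr 1
    omega
  have key : ∀ T : Fin n → α,
      (occursAt w (List.ofFn T) i ∧ occursAt w (List.ofFn T) (i + c.length)) ↔
        occursAt (w ++ c) (List.ofFn T) i := by
    intro T
    have hL : (List.ofFn T).length = n := by simp
    rw [occursAt_iff_getElem w _ i (by omega), occursAt_iff_getElem w _ (i + c.length) (by omega),
      occursAt_iff_getElem (w ++ c) _ i (by simp; omega)]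
    constructor
    · rintro ⟨h1, h2⟩ j hj
      simp only [List.length_append] at hj
      rw [List.getElem_append]
      split
      · exact h1 j ‹_›
      · rename_i hjw
        push_neg at hjw
        have h3 := h2 (j - c.length) (by omega)
        have h3' : (List.ofFn T)[i + j]'(by simp; omega) = w[j - c.length]'(by omega) := by
          convert h3 using 2
          omega
        exact h3'.trans (hce j hjw (by omega)).symm
    · intro h1
      constructor
      · intro j hj
        rw [h1 j (by simp; omega), List.getElem_append, dif_pos hj]
      · intro j hj
        have h2 := h1 (c.length + j) (by simp; omega)
        have h2' : (List.ofFn T)[i + c.length + j]'(by simp; omega)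
            = (w ++ c)[c.length + j]'(by simp; omega) := by
          convert h2 using 2
          omega
        have h4 : (e ++ w)[c.length + j]'(by simp; omega) = w[j] := by
          rw [List.getElem_append, dif_neg (by omega)]
          congr 1
          omega
        exact h2'.trans ((hwc (c.length + j) (by omega)).trans h4)
  calc ∑ T : Fin n → α,
      (if occursAt w (List.ofFn T) i ∧ occursAt w (List.ofFn T) (i + c.length)
        then ∏ j, p (T j) else 0)
      = ∑ T : Fin n → α, (if occursAt (w ++ c) (List.ofFn T) i then ∏ j, p (T j) else 0) :=
        Finset.sum_congr rfl fun T _ => by rw [if_congr (key T) rfl rfl]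
    _ = ((w ++ c).map p).prod := sum_occurs p hsum (w ++ c) n i (by simp; omega)
    _ = (w.map p).prod * (c.map p).prod := by rw [List.map_append, List.prod_append]
end

section
/- In the Bernoulli model, the probability that an occurrence of w at a given position is the last occurrence of its clump equals π(w)·(1 − Σ_{κ∈K(w)} π(κ)): precisely, for a nonempty word w and a position i with i + 2|w| − 1 ≤ n, the probability that a random text T of length n has an occurrence of w at position i and no occurrence of w at any position j with i < j < i + |w| equals π(w)·(1 − Σ_{κ∈K(w)} π(κ)). -/
section BocAux
variable {α : Type*}

lemma boc_occursAt_iff (u L : List α) (i : ℕ) :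
    occursAt u L i ↔ i + u.length ≤ L.length ∧ (L.drop i).take u.length = u := by
  constructor
  · rintro ⟨x, y, rfl, rfl⟩
    constructor
    · simp
    · rw [List.append_assoc, List.drop_left, List.take_left]
  · rintro ⟨h1, h2⟩
    refine ⟨L.take i, L.drop (i + u.length), ?_, by simp; omega⟩
    have key : L.take i ++ (L.drop i).take u.length ++ L.drop (i + u.length) = L := by
      rw [List.append_assoc, ← List.drop_drop, List.take_append_drop, List.take_append_drop]
    rw [h2] at key
    exact key.symm

lemma boc_occursAt_prefix {u v L : List α} {i : ℕ} (h : v <+: u) (ho : occursAt u L i) :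
    occursAt v L i := by
  obtain ⟨x, y, rfl, rfl⟩ := ho
  obtain ⟨r, rfl⟩ := h
  exact ⟨x, r ++ y, by simp, rfl⟩

lemma boc_corr_of_two_occ {w L : List α} {i j : ℕ}
    (h1 : occursAt w L i) (h2 : occursAt w L j) (hij : i < j) (hjm : j < i + w.length) :
    ((L.drop (i + w.length)).take (j - i)) ∈ CorrPos w ∧
      occursAt (w ++ (L.drop (i + w.length)).take (j - i)) L i := by
  rw [boc_occursAt_iff] at h1 h2
  obtain ⟨hi, ti⟩ := h1
  obtain ⟨hj, tj⟩ := h2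
  set m := w.length with hm
  set d := j - i with hd
  set c := (L.drop (i + m)).take d with hc
  have hclen : c.length = d := by
    rw [hc, List.length_take, List.length_drop]; omega
  have hwc : w ++ c = (L.drop i).take (m + d) := by
    rw [List.take_add, ti, hc, List.drop_drop]
  have hew : (L.drop i).take d ++ w = (L.drop i).take (d + m) := by
    rw [List.take_add, List.drop_drop, show i + d = j by omega, tj]
  have hcorr : c ∈ CorrPos w := by
    refine ⟨⟨by omega, ⟨(L.drop i).take d, ?_⟩⟩, ?_⟩
    · rw [hwc, hew]; congr 1; omega
    · simp only [Set.mem_singleton_iff]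
      intro hnil
      rw [hnil] at hclen
      simp at hclen
      omega
  refine ⟨hcorr, ?_⟩
  rw [boc_occursAt_iff]
  constructor
  · simp [hclen]; omega
  · rw [List.length_append, hclen, ← hm, hwc]

lemma boc_exists_K_prefix {w : List α} : ∀ c ∈ CorrPos w, ∃ κ ∈ KCode w, κ <+: c := by
  classical
  suffices H : ∀ N : ℕ, ∀ c ∈ CorrPos w, c.length ≤ N → ∃ κ ∈ KCode w, κ <+: c by
    intro c hc; exact H c.length c hc le_rfl
  intro N
  induction N with
  | zero =>
    intro c hc hlen
    exfalso
    have : c = [] := List.eq_nil_of_length_eq_zero (by omega)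
    exact hc.2 this
  | succ N ih =>
    intro c hc hlen
    by_cases hmem : c ∈ lconc (CorrPos w) (Aplus α)
    · obtain ⟨a, ha, b, hb, rfl⟩ := hmem
      have hb' : b ≠ [] := hb
      have : a.length ≤ N := by
        have := (List.length_append : (a ++ b).length = a.length + b.length) ▸ hlen
        have : 0 < b.length := List.length_pos_iff.mpr hb'
        simp [List.length_append] at hlen
        omega
      obtain ⟨κ, hκ, hpre⟩ := ih a ha this
      exact ⟨κ, hκ, hpre.trans (List.prefix_append a b)⟩
    · exact ⟨c, ⟨hc, hmem⟩, List.prefix_rfl⟩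

lemma boc_K_occ {w κ L : List α} {i : ℕ} (hκ : κ ∈ KCode w)
    (ho : occursAt (w ++ κ) L i) : occursAt w L (i + κ.length) := by
  obtain ⟨⟨⟨hlen, e, hew⟩, hne⟩, -⟩ := hκ
  obtain ⟨x, y, hL, hx⟩ := ho
  have helen : e.length = κ.length := by
    have := congrArg List.length hew
    simp at this
    omega
  refine ⟨x ++ e, y, ?_, by simp [hx, helen]⟩
  rw [hL]
  rw [List.append_assoc x, hew]
  simp

lemma boc_K_prefix_free {w κ₁ κ₂ : List α} (h1 : κ₁ ∈ KCode w) (h2 : κ₂ ∈ KCode w)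
    (hpre : κ₁ <+: κ₂) : κ₁ = κ₂ := by
  by_contra hne
  obtain ⟨r, rfl⟩ := hpre
  have hr : r ≠ [] := by rintro rfl; simp at hne
  exact h2.2 ⟨κ₁, h1.1, r, hr, rfl⟩

lemma boc_K_unique {w κ₁ κ₂ L : List α} {i : ℕ} (h1 : κ₁ ∈ KCode w) (h2 : κ₂ ∈ KCode w)
    (ho1 : occursAt (w ++ κ₁) L i) (ho2 : occursAt (w ++ κ₂) L i) : κ₁ = κ₂ := by
  rw [boc_occursAt_iff] at ho1 ho2
  have p1 : w ++ κ₁ <+: L.drop i := ho1.2 ▸ List.take_prefix _ _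
  have p2 : w ++ κ₂ <+: L.drop i := ho2.2 ▸ List.take_prefix _ _
  rcases List.prefix_or_prefix_of_prefix p1 p2 with h | h
  · exact boc_K_prefix_free h1 h2 ((List.prefix_append_right_inj w).mp h)
  · exact (boc_K_prefix_free h2 h1 ((List.prefix_append_right_inj w).mp h)).symm

lemma boc_take_drop_getElem {n : ℕ} (T : Fin n → α) (u : List α) (i k : ℕ)
    (h : i + u.length ≤ n) (hk : k < u.length) :
    (((List.ofFn T).drop i).take u.length)[k]'(by simp; omega) = T ⟨i + k, by omega⟩ := by
  simp [List.getElem_take, List.getElem_drop, List.getElem_ofFn]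

lemma boc_occursAt_iff_forall {n : ℕ} (T : Fin n → α) (u : List α) (i : ℕ) (d : α)
    (h : i + u.length ≤ n) :
    occursAt u (List.ofFn T) i ↔
      ∀ k (hk : k < u.length), T ⟨i + k, by omega⟩ = u.getD k d := by
  rw [boc_occursAt_iff]
  have hlen : (((List.ofFn T).drop i).take u.length).length = u.length := by
    simp; omega
  constructor
  · rintro ⟨-, hts⟩ k hk
    rw [List.getD_eq_getElem u d hk, ← boc_take_drop_getElem T u i k h hk]
    simp only [hts]
  · intro hall
    refine ⟨by simp; omega, ?_⟩
    apply List.ext_getElem hlen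
    intro k h1 h2
    rw [boc_take_drop_getElem T u i k h h2, hall k h2, List.getD_eq_getElem u d h2]

open Classical in
lemma boc_sum_pattern [Fintype α] (p : α → ℝ) (hsum : ∑ a, p a = 1) {n : ℕ}
    (u : List α) (d : α) (i : ℕ) (h : i + u.length ≤ n) :
    ∑ T : Fin n → α, (if occursAt u (List.ofFn T) i then ∏ j, p (T j) else 0)
      = (u.map p).prod := by
  set g : Fin n → α → ℝ := fun j a =>
    if i ≤ (j : ℕ) ∧ (j : ℕ) < i + u.length then
      (if a = u.getD ((j : ℕ) - i) d then p a else 0) else p a with hg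
  have key : ∀ T : Fin n → α,
      (if occursAt u (List.ofFn T) i then ∏ j, p (T j) else 0) = ∏ j, g j (T j) := by
    intro T
    by_cases hocc : occursAt u (List.ofFn T) i
    · rw [if_pos hocc]
      refine Finset.prod_congr rfl fun j _ => ?_
      rw [hg]
      dsimp only
      split
      · next hj =>
        have e : T j = u.getD ((j : ℕ) - i) d := by
          have h3 := (boc_occursAt_iff_forall T u i d h).mp hocc ((j : ℕ) - i) (by omega)
          have h4 : (⟨i + ((j : ℕ) - i), by omega⟩ : Fin n) = j := by
            apply Fin.ext; simp; omega
          rwa [h4] at h3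
        rw [if_pos e]
      · rfl
    · rw [if_neg hocc]
      rw [boc_occursAt_iff_forall T u i d h] at hocc
      push_neg at hocc
      obtain ⟨k, hk, hne⟩ := hocc
      refine (Finset.prod_eq_zero (Finset.mem_univ (⟨i + k, by omega⟩ : Fin n)) ?_).symm
      rw [hg]
      dsimp only
      rw [if_pos (by constructor <;> simp <;> omega), if_neg]
      intro hcon
      apply hne
      rwa [show i + k - i = k by omega] at hcon
  rw [Finset.sum_congr rfl fun T _ => key T]
  have h1 : ∑ T : Fin n → α, ∏ j, g j (T j) = ∏ j : Fin n, ∑ a : α, g j a := by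
    rw [Finset.prod_univ_sum, Fintype.piFinset_univ]
  rw [h1]
  have h2 : ∀ j : Fin n, ∑ a : α, g j a =
      if i ≤ (j : ℕ) ∧ (j : ℕ) < i + u.length then p (u.getD ((j : ℕ) - i) d) else 1 := by
    intro j
    rw [hg]
    dsimp only
    split
    · rw [Finset.sum_ite_eq' Finset.univ (u.getD ((j : ℕ) - i) d) p, if_pos (Finset.mem_univ _)]
    · exact hsum
  rw [Finset.prod_congr rfl fun j _ => h2 j, ← Finset.prod_filter]
  have h3 : (u.map p).prod = ∏ k : Fin u.length, p (u.getD (k : ℕ) d) := by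
    conv_lhs => rw [← (List.ofFn_getElem : (List.ofFn fun k : Fin u.length => u[(k : ℕ)]) = u), List.map_ofFn, List.prod_ofFn]
    refine Finset.prod_congr rfl fun k _ => ?_
    rw [Function.comp_apply, List.getD_eq_getElem u d k.isLt]
  rw [h3]
  refine Finset.prod_bij' (fun j hj => (⟨(j : ℕ) - i, by simp at hj; omega⟩ : Fin u.length))
    (fun k _ => (⟨i + (k : ℕ), by omega⟩ : Fin n)) ?_ ?_ ?_ ?_ ?_
  · intro j hj
    exact Finset.mem_univ _
  · intro k hk
    simp only [Finset.mem_filter, Finset.mem_univ, true_and]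
    omega
  · intro j hj
    apply Fin.ext
    simp at hj ⊢
    omega
  · intro k hk
    apply Fin.ext
    simp
  · intro j hj
    simp at hj
    congr 1

end BocAux

open Classical in
/-- Bernoulli model: for `i + 2|w| − 1 ≤ n`, the probability that a
random text of length `n` has an occurrence of `w` at position `i` and no
occurrence of `w` at any position `j` with `i < j < i + |w|` equals
`π(w)·(1 − Σ_{κ ∈ K(w)} π(κ))`. -/
theorem bernoulli_last_occurrence_of_clump {α : Type*} [Fintype α] (p : α → ℝ)
    (hp : ∀ a, 0 ≤ p a) (hsum : ∑ a, p a = 1)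
    (w : List α) (hw : w ≠ []) (n i : ℕ) (hn : i + 2 * w.length - 1 ≤ n) :
    ∑ T : Fin n → α,
      (if occursAt w (List.ofFn T) i ∧
          (∀ j, i < j → j < i + w.length → ¬ occursAt w (List.ofFn T) j)
        then ∏ j, p (T j) else 0)
    = (w.map p).prod * (1 - ∑ᶠ κ ∈ KCode w, (κ.map p).prod) := by
  have hm : 0 < w.length := List.length_pos_iff.mpr hw
  set m := w.length with hmdef
  have d : α := w.head hw
  have hKfin : (KCode w).Finite :=
    (List.finite_length_lt α m).subset (fun c hc => hc.1.1.1)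
  set Kf : Finset (List α) := hKfin.toFinset with hKf
  have hKmem : ∀ κ, κ ∈ Kf ↔ κ ∈ KCode w := fun κ => hKfin.mem_toFinset
  have hKlen : ∀ κ ∈ Kf, κ.length < m ∧ κ ≠ [] := by
    intro κ hκ
    rw [hKmem] at hκ
    exact ⟨hκ.1.1.1, hκ.1.2⟩
  have hfs : ∑ᶠ κ ∈ KCode w, ((κ.map p).prod) = ∑ κ ∈ Kf, (κ.map p).prod := by
    rw [← hKfin.coe_toFinset, finsum_mem_coe_finset]
  rw [hfs]
  -- pointwise decomposition
  have hdec : ∀ T : Fin n → α,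
      (if occursAt w (List.ofFn T) i ∧
          (∀ j, i < j → j < i + m → ¬ occursAt w (List.ofFn T) j)
        then ∏ j, p (T j) else 0)
      = (if occursAt w (List.ofFn T) i then ∏ j, p (T j) else 0)
        - ∑ κ ∈ Kf, (if occursAt (w ++ κ) (List.ofFn T) i then ∏ j, p (T j) else 0) := by
    intro T
    set L := List.ofFn T with hL
    by_cases hA : occursAt w L i
    · by_cases hB : ∀ j, i < j → j < i + m → ¬ occursAt w L j
      · rw [if_pos ⟨hA, hB⟩, if_pos hA]
        have hz : ∀ κ ∈ Kf, (if occursAt (w ++ κ) L i then ∏ j, p (T j) else 0) = 0 := by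
          intro κ hκ
          rw [if_neg]
          intro hocc
          have h5 := boc_K_occ ((hKmem κ).mp hκ) hocc
          obtain ⟨hlt, hne⟩ := hKlen κ hκ
          have hpos : 0 < κ.length := List.length_pos_iff.mpr hne
          exact hB (i + κ.length) (by omega) (by omega) h5
        rw [Finset.sum_eq_zero hz]
        ring
      · rw [if_neg (by tauto)]
        push_neg at hB
        obtain ⟨j, hij, hjm, hocc⟩ := hB
        obtain ⟨hc, hoccwc⟩ := boc_corr_of_two_occ hA hocc hij hjm
        obtain ⟨κ, hκK, hκpre⟩ := boc_exists_K_prefix _ hc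
        have hoccwκ : occursAt (w ++ κ) L i :=
          boc_occursAt_prefix ((List.prefix_append_right_inj w).mpr hκpre) hoccwc
        rw [if_pos hA]
        rw [Finset.sum_eq_single_of_mem κ ((hKmem κ).mpr hκK)]
        · rw [if_pos hoccwκ]; ring
        · intro κ' hκ' hne
          rw [if_neg]
          intro hocc'
          exact hne (boc_K_unique ((hKmem κ').mp hκ') hκK hocc' hoccwκ)
    · rw [if_neg (by tauto), if_neg hA]
      have hz : ∀ κ ∈ Kf, (if occursAt (w ++ κ) L i then ∏ j, p (T j) else 0) = 0 := by
        intro κ hκ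
        rw [if_neg]
        intro hocc
        exact hA (boc_occursAt_prefix (List.prefix_append w κ) hocc)
      rw [Finset.sum_eq_zero hz]
      ring
  rw [Finset.sum_congr rfl fun T _ => hdec T, Finset.sum_sub_distrib]
  rw [boc_sum_pattern p hsum w d i (by omega)]
  rw [Finset.sum_comm]
  have hterm : ∀ κ ∈ Kf,
      ∑ T : Fin n → α, (if occursAt (w ++ κ) (List.ofFn T) i then ∏ j, p (T j) else 0)
        = (w.map p).prod * (κ.map p).prod := by
    intro κ hκ
    obtain ⟨hlt, -⟩ := hKlen κ hκ
    rw [boc_sum_pattern p hsum (w ++ κ) d i (by simp [List.length_append]; omega)]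
    rw [List.map_append, List.prod_append]
  rw [Finset.sum_congr rfl hterm, ← Finset.mul_sum]
  ring
end

section
/- For a reduced finite set of nonempty words W = {w₁, …, w_r} (no word of W is a factor of a different word of W), and for any indices i, j: every element of M_{ij}(W) that does not belong to K_{ij} has w_j as a suffix; that is, M_{ij}(W) \ K_{ij} ⊆ A*·{w_j}, so there is a language L with M_{ij}(W) \ K_{ij} = L·{w_j}. -/
/-- The correlation set `C_{ij}` of a pair of words. -/
def CorrPair {α : Type*} (w₁ w₂ : List α) : Set (List α) :=
  {e | 0 < e.length ∧ e.length < w₂.length ∧ ∃ e', e' ≠ [] ∧ w₁ ++ e = e' ++ w₂}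

/-- The minimal correlation language `K_{ij} = C_{ij} \ C_{ij}·A⁺`. -/
def KPair {α : Type*} (w₁ w₂ : List α) : Set (List α) :=
  CorrPair w₁ w₂ \ lconc (CorrPair w₁ w₂) (Aplus α)

/-- `u` is a factor of `v`. -/
def IsFactor {α : Type*} (u v : List α) : Prop := ∃ x y, v = x ++ u ++ y

/-- The minimal language `M_{ij}(W)` for a finite set of words `W`: nonempty words
`m` with `w_i ++ m = e ++ w_j` for some `e`, and no word of `W` occurring strictly
inside `w_i ++ m`. -/
def MinLangSet {α : Type*} (W : Set (List α)) (wi wj : List α) : Set (List α) :=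
  {m | m ≠ [] ∧ (∃ e, wi ++ m = e ++ wj) ∧
    ∀ wl ∈ W, ∀ q, occursAt wl (wi ++ m) q →
      q = 0 ∨ q + wl.length = wi.length + m.length}

/-- for a reduced finite set `W` of nonempty words and `w_i, w_j ∈ W`,
`M_{ij}(W) \ K_{ij} ⊆ A*·{w_j}`, hence `M_{ij}(W) \ K_{ij} = L·{w_j}` for some
language `L`. -/
theorem minLangSet_sdiff_kpair {α : Type*} (W : Set (List α)) (hfin : W.Finite)
    (hne : ∀ w ∈ W, w ≠ [])
    (hred : ∀ u ∈ W, ∀ v ∈ W, u ≠ v → ¬ IsFactor u v)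
    (wi wj : List α) (hi : wi ∈ W) (hj : wj ∈ W) :
    MinLangSet W wi wj \ KPair wi wj ⊆ lconc (Set.univ : Set (List α)) {wj} ∧
    ∃ L : Set (List α), MinLangSet W wi wj \ KPair wi wj = lconc L {wj} := by
  have key : ∀ m ∈ MinLangSet W wi wj \ KPair wi wj, ∃ a, m = a ++ wj := by
    rintro m ⟨⟨hm1, ⟨e, he⟩, hmin⟩, hnk⟩
    by_cases hlen : wj.length ≤ m.length
    · refine ⟨e.drop wi.length, ?_⟩
      have hlene := congrArg List.length he
      simp only [List.length_append] at hlene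
      have hle : wi.length ≤ e.length := by omega
      have hm : m = (wi ++ m).drop wi.length := by simp
      rw [he, List.drop_append, Nat.sub_eq_zero_of_le hle,
        List.drop_zero] at hm
      exact hm
    · exfalso
      have hmC : m ∈ CorrPair wi wj := by
        refine ⟨List.length_pos_iff.mpr hm1, by omega, e, ?_, he⟩
        intro heq
        subst heq
        simp only [List.nil_append] at he
        have hne' : wi ≠ wj := by
          intro h
          have := congrArg List.length he
          simp only [List.length_append, h] at this
          have : m.length = 0 := by omega
          exact hm1 (List.length_eq_zero_iff.mp this)
        exact hred wi hi wj hj hne' ⟨[], m, by rw [List.nil_append, ← he]⟩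
      have hml : m ∈ lconc (CorrPair wi wj) (Aplus α) := by
        by_contra h
        exact hnk ⟨hmC, h⟩
      obtain ⟨c, hc, t, ht, hmct⟩ := hml
      obtain ⟨hc0, hclen, e'', he''ne, hce⟩ := hc
      have hocc : occursAt wj (wi ++ m) e''.length :=
        ⟨e'', t, by rw [hmct, ← List.append_assoc, hce], rfl⟩
      rcases hmin wj hj e''.length hocc with h0 | hend
      · exact he''ne (List.length_eq_zero_iff.mp h0)
      · have hle : e''.length + wj.length = wi.length + c.length := by
          have := congrArg List.length hce
          simp only [List.length_append] at this
          omega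
        have htl : 0 < t.length := List.length_pos_iff.mpr ht
        have : m.length = c.length + t.length := by
          rw [hmct]; simp
        omega
  constructor
  · intro m hm
    obtain ⟨a, ha⟩ := key m hm
    exact ⟨a, trivial, wj, rfl, ha⟩
  · refine ⟨{a | a ++ wj ∈ MinLangSet W wi wj \ KPair wi wj}, ?_⟩
    ext m
    constructor
    · intro hm
      obtain ⟨a, ha⟩ := key m hm
      exact ⟨a, by simp only [Set.mem_setOf_eq, ← ha]; exact hm, wj, rfl, ha⟩
    · rintro ⟨a, ha, b, hb, rfl⟩
      simp only [Set.mem_singleton_iff] at hb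
      subst hb
      exact ha
end
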